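/- Let β : ℝ → ℝ be smooth with β(s) = 0 for s ≤ 1/2 and β(s) = 1 for s ≥ 1, and let G : ℝ⁴ \ {0} → ℝ be smooth with ‖∇^j G(x)‖ ≤ ‖x‖^{−2−j} for j = 0, 1, 2 and all ‖x‖ ≥ 1 (∇^j denoting the j-th total derivative). For R ≥ 4 define u_R : ℝ⁴ → ℝ by u_R(x) = β(R^{−1/2}‖x‖) · G(x) for x ≠ 0 and u_R(0) = 0. Then u_R is smooth, and there is a constant C depending only on β (not on R or G) such that ‖∇² u_R(x)‖ ≤ C R^{−2} for all x ∈ ℝ⁴ and all R ≥ 4. -/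

import Mathlib

open Filter Set

set_option maxHeartbeats 1000000
set_option synthInstance.maxHeartbeats 400000

private lemma iFD_congr_nhds {E F : Type*} [NormedAddCommGroup E] [NormedSpace ℝ E]
    [NormedAddCommGroup F] [NormedSpace ℝ F] {f g : E → F} {x : E}
    (h : f =ᶠ[nhds x] g) (n : ℕ) :
    iteratedFDeriv ℝ n f x = iteratedFDeriv ℝ n g x := by
  simp_rw [← iteratedFDerivWithin_univ]
  exact Filter.EventuallyEq.iteratedFDerivWithin_eq (by rwa [nhdsWithin_univ]) h.eq_of_nhds n

private lemma inv_le_mul_inv' {a b k : ℝ} (ha : 0 < a) (hb : 0 < b) (h : b ≤ k * a) :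
    a⁻¹ ≤ k * b⁻¹ := by
  rw [inv_eq_one_div, show k * b⁻¹ = k / b from (div_eq_mul_inv k b).symm,
    div_le_div_iff₀ ha hb]
  linarith

/-- smoothness of `t ↦ β (√t)` when `β` vanishes on `(-∞, 1/2]`. -/
private lemma bt_smooth (β : ℝ → ℝ) (hβ : ContDiff ℝ (⊤ : ℕ∞) β)
    (hβ0 : ∀ s : ℝ, s ≤ 1 / 2 → β s = 0) :
    ContDiff ℝ (⊤ : ℕ∞) (fun t : ℝ => β (Real.sqrt t)) := by
  have hq : Real.sqrt (1/4 : ℝ) = 1/2 := by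
    rw [show (1/4:ℝ) = (1/2)^2 by norm_num, Real.sqrt_sq (by norm_num : (0:ℝ) ≤ 1/2)]
  rw [contDiff_iff_contDiffAt]
  intro t
  rcases lt_or_ge t (1/4 : ℝ) with ht | ht
  · refine ContDiffAt.congr_of_eventuallyEq (contDiffAt_const (c := (0:ℝ))) ?_
    filter_upwards [Iio_mem_nhds ht] with s hs
    have : Real.sqrt s ≤ 1/2 := by
      rw [← hq]; exact Real.sqrt_le_sqrt (le_of_lt hs)
    exact hβ0 _ this
  · exact (hβ.contDiffAt).comp t (Real.contDiffAt_sqrt (by positivity))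

/-- uniform bound on the first three derivatives of a smooth function which is
`0` below `1/4` and `1` above `1`. -/
private lemma bt_bound (f : ℝ → ℝ) (hf : ContDiff ℝ (⊤ : ℕ∞) f)
    (h0 : ∀ t : ℝ, t ≤ 1/4 → f t = 0) (h1 : ∀ t : ℝ, 1 ≤ t → f t = 1) :
    ∃ Cb : ℝ, 1 ≤ Cb ∧ ∀ i : ℕ, i ≤ 2 → ∀ t : ℝ, ‖iteratedFDeriv ℝ i f t‖ ≤ Cb := by
  have key : ∀ i : ℕ, ∃ Ci : ℝ, ∀ t : ℝ, ‖iteratedFDeriv ℝ i f t‖ ≤ max 1 Ci := by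
    intro i
    have hc : Continuous fun t => iteratedFDeriv ℝ i f t :=
      hf.continuous_iteratedFDeriv (WithTop.coe_le_coe.2 le_top)
    obtain ⟨Ci, hCi⟩ := (isCompact_Icc (a := (0:ℝ)) (b := 2)).exists_bound_of_continuousOn
      hc.continuousOn
    refine ⟨Ci, fun t => ?_⟩
    by_cases hmem : t ∈ Icc (0:ℝ) 2
    · exact le_max_of_le_right (hCi t hmem)
    · rw [mem_Icc, not_and_or] at hmem
      rcases hmem with hneg | hbig
      · push_neg at hneg
        have hev : f =ᶠ[nhds t] fun _ => (0:ℝ) := by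
          filter_upwards [Iio_mem_nhds (show t < 1/4 by linarith)] with s hs
          exact h0 s (le_of_lt hs)
        rw [iFD_congr_nhds hev, iteratedFDeriv_zero_fun]
        simp
      · push_neg at hbig
        have hev : f =ᶠ[nhds t] fun _ => (1:ℝ) := by
          filter_upwards [Ioi_mem_nhds (show (1:ℝ) < t by linarith)] with s hs
          exact h1 s hs.le
        rw [iFD_congr_nhds hev]
        rcases Nat.eq_zero_or_pos i with hi | hi
        · subst hi
          rw [norm_iteratedFDeriv_zero]
          simp
        · rw [iteratedFDeriv_const_of_ne (Nat.pos_iff_ne_zero.1 hi)]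
          simp
  obtain ⟨C0, hC0⟩ := key 0
  obtain ⟨C1, hC1⟩ := key 1
  obtain ⟨C2, hC2⟩ := key 2
  refine ⟨max (max 1 C0) (max (max 1 C1) (max 1 C2)),
    le_trans (le_max_left 1 C0) (le_max_left _ _), ?_⟩
  intro i hi t
  interval_cases i
  · exact le_trans (hC0 t) (le_max_left _ _)
  · exact le_trans (hC1 t) (le_trans (le_max_left _ _) (le_max_right _ _))
  · exact le_trans (hC2 t) (le_trans (le_max_right _ _) (le_max_right _ _))

private lemma normsq_iFD_bounds {E : Type*} [NormedAddCommGroup E] [InnerProductSpace ℝ E]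
    (c : ℝ) (hc : 0 < c) (x : E) :
    ‖iteratedFDeriv ℝ 1 (fun y : E => c * ‖y‖^2) x‖ ≤ 2 * c * ‖x‖ ∧
    ‖iteratedFDeriv ℝ 2 (fun y : E => c * ‖y‖^2) x‖ ≤ 2 * c := by
  have hnormval : ∀ y : E, ‖(2*c) • innerSL ℝ y‖ = 2 * c * ‖y‖ := by
    intro y
    rw [norm_smul (2*c) ((innerSL ℝ) y), innerSL_apply_norm, Real.norm_eq_abs,
      abs_of_pos (by positivity)]
  set M : E →L[ℝ] (E →L[ℝ] ℝ) := LinearMap.mkContinuous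
    { toFun := fun y => (2*c) • innerSL ℝ y
      map_add' := by intro y z; ext w; simp [inner_add_left]
      map_smul' := by intro a y; ext w; simp [real_inner_smul_left]; ring }
    (2*c) (fun y => by simp only [LinearMap.coe_mk, AddHom.coe_mk]; rw [hnormval]) with hMdef
  have hMapp : ∀ y : E, M y = (2*c) • innerSL ℝ y := fun y => rfl
  have hMnorm : ‖M‖ ≤ 2 * c := LinearMap.mkContinuous_norm_le _ (by positivity) _
  have hfd : ∀ y : E, HasFDerivAt (fun y : E => c * ‖y‖^2) (M y) y := by
    intro y
    have h1 := ((hasStrictFDerivAt_norm_sq y).hasFDerivAt).const_mul c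
    refine h1.congr_fderiv ?_
    rw [hMapp]
    ext v
    simp only [ContinuousLinearMap.smul_apply, ContinuousLinearMap.add_apply,
      ContinuousLinearMap.coe_smul', Pi.smul_apply, smul_eq_mul, innerSL_apply_apply, two_smul]
    ring
  have hfderiv : (fderiv ℝ (fun y : E => c * ‖y‖^2)) = fun y => M y :=
    funext fun y => (hfd y).fderiv
  constructor
  · rw [show ‖iteratedFDeriv ℝ 1 (fun y : E => c * ‖y‖^2) x‖ =
        ‖iteratedFDeriv ℝ 0 (fderiv ℝ (fun y : E => c * ‖y‖^2)) x‖ from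
        (norm_iteratedFDeriv_fderiv (n := 0)).symm,
      norm_iteratedFDeriv_zero, hfderiv]
    rw [show ‖(fun y : E => M y) x‖ = ‖M x‖ from rfl, hMapp, hnormval]
  · rw [show ‖iteratedFDeriv ℝ 2 (fun y : E => c * ‖y‖^2) x‖ =
        ‖iteratedFDeriv ℝ 0 (fderiv ℝ (fderiv ℝ (fun y : E => c * ‖y‖^2))) x‖ from
        ((norm_iteratedFDeriv_fderiv (n := 0)).trans
          (norm_iteratedFDeriv_fderiv (n := 1))).symm,
      norm_iteratedFDeriv_zero, hfderiv,
      show (fun y : E => M y) = (M : E → (E →L[ℝ] ℝ)) from rfl,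
      ContinuousLinearMap.fderiv]
    exact hMnorm

/-- Let `β : ℝ → ℝ` be smooth with `β = 0` on `(-∞, 1/2]` and `β = 1` on
`[1, ∞)`. There is a constant `C` depending only on `β` such that: for every
`G : ℝ⁴ \ {0} → ℝ` smooth with `‖∇ʲG(x)‖ ≤ ‖x‖^{-2-j}` for `j = 0,1,2` and `‖x‖ ≥ 1`, and
every `R ≥ 4`, the function `u_R(x) = β(R^{-1/2}‖x‖)·G(x)` (with `u_R(0) = 0`) is smooth
and satisfies `‖∇²u_R(x)‖ ≤ C·R⁻²` everywhere. -/
theorem stmt17 (β : ℝ → ℝ) (hβ : ContDiff ℝ (⊤ : ℕ∞) β)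
    (hβ0 : ∀ s : ℝ, s ≤ 1 / 2 → β s = 0) (hβ1 : ∀ s : ℝ, 1 ≤ s → β s = 1) :
    ∃ C : ℝ, 0 < C ∧
      ∀ G : EuclideanSpace ℝ (Fin 4) → ℝ,
        ContDiffOn ℝ (⊤ : ℕ∞) G {x | x ≠ 0} →
        (∀ j : ℕ, j ≤ 2 → ∀ x : EuclideanSpace ℝ (Fin 4), 1 ≤ ‖x‖ →
          ‖iteratedFDeriv ℝ j G x‖ ≤ (‖x‖ ^ (2 + j))⁻¹) →
        ∀ R : ℝ, 4 ≤ R →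
        ∀ uR : EuclideanSpace ℝ (Fin 4) → ℝ,
          (uR 0 = 0 ∧ ∀ x : EuclideanSpace ℝ (Fin 4), x ≠ 0 →
            uR x = β (R ^ (-(1 : ℝ) / 2) * ‖x‖) * G x) →
          ContDiff ℝ (⊤ : ℕ∞) uR ∧
          ∀ x : EuclideanSpace ℝ (Fin 4),
            ‖iteratedFDeriv ℝ 2 uR x‖ ≤ C * R ^ (-(2 : ℝ)) := by
  classical
  set E := EuclideanSpace ℝ (Fin 4)
  set bt : ℝ → ℝ := fun t => β (Real.sqrt t) with hbt_def
  have hbt : ContDiff ℝ (⊤ : ℕ∞) bt := bt_smooth β hβ hβ0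
  have hbt0 : ∀ t : ℝ, t ≤ 1/4 → bt t = 0 := by
    intro t ht
    have : Real.sqrt t ≤ 1/2 := by
      rw [show (1/2:ℝ) = Real.sqrt (1/4) by
        rw [show (1/4:ℝ) = (1/2)^2 by norm_num, Real.sqrt_sq (by norm_num : (0:ℝ) ≤ 1/2)]]
      exact Real.sqrt_le_sqrt ht
    exact hβ0 _ this
  have hbt1 : ∀ t : ℝ, 1 ≤ t → bt t = 1 := by
    intro t ht
    exact hβ1 _ (Real.one_le_sqrt.2 ht)
  obtain ⟨Cb, hCb1, hCb⟩ := bt_bound bt hbt hbt0 hbt1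
  refine ⟨100 * Cb, by linarith, ?_⟩
  intro G hG hGb R hR uR ⟨huR0, huRx⟩
  have hR0 : (0:ℝ) < R := by linarith
  have hRinv : (0:ℝ) < R⁻¹ := inv_pos.2 hR0
  have hRinv4 : R⁻¹ ≤ 1/4 := by
    rw [inv_le_comm₀ hR0 (by norm_num)]
    linarith
  -- identify uR with the product of the cutoff and G
  have huR : uR = fun y : E => bt (R⁻¹ * ‖y‖^2) * G y := by
    funext y
    by_cases hy : y = (0:E)
    · subst hy
      rw [huR0]
      have h0 : R⁻¹ * ‖(0:E)‖^2 = 0 := by simp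
      rw [h0, hbt0 0 (by norm_num), zero_mul]
    · rw [huRx y hy]
      have hs : Real.sqrt (R⁻¹ * ‖y‖^2) = R ^ (-(1:ℝ)/2) * ‖y‖ := by
        rw [Real.sqrt_mul (le_of_lt hRinv), Real.sqrt_sq (norm_nonneg y),
          Real.sqrt_inv, show (-(1:ℝ)/2) = -(1/2) by norm_num,
          Real.rpow_neg hR0.le, ← Real.sqrt_eq_rpow]
      rw [hbt_def]
      simp only []
      rw [hs]
  subst huR
  -- smoothness
  have hh : ContDiff ℝ (⊤ : ℕ∞) (fun y : E => R⁻¹ * ‖y‖^2) :=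
    contDiff_const.mul (contDiff_norm_sq ℝ)
  have hφ : ContDiff ℝ (⊤ : ℕ∞) (fun y : E => bt (R⁻¹ * ‖y‖^2)) := hbt.comp hh
  have hUo : IsOpen {z : E | z ≠ 0} := isOpen_ne
  have hsmooth : ContDiff ℝ (⊤ : ℕ∞) (fun y : E => bt (R⁻¹ * ‖y‖^2) * G y) := by
    rw [contDiff_iff_contDiffAt]
    intro y
    rcases lt_or_ge ‖y‖ 1 with hy | hy
    · refine ContDiffAt.congr_of_eventuallyEq (contDiffAt_const (c := (0:ℝ))) ?_
      have hVo : IsOpen {z : E | ‖z‖ < 1} := isOpen_lt continuous_norm continuous_const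
      filter_upwards [hVo.mem_nhds hy] with z hz
      have hz1 : R⁻¹ * ‖z‖^2 ≤ 1/4 := by
        have h2 : ‖z‖^2 ≤ 1 := by nlinarith [norm_nonneg z, hz]
        nlinarith [hRinv.le]
      rw [hbt0 _ hz1, zero_mul]
    · have hy0 : y ≠ 0 := by
        intro h; rw [h] at hy; simp at hy; linarith
      exact hφ.contDiffAt.mul (hG.contDiffAt (hUo.mem_nhds hy0))
  refine ⟨hsmooth, ?_⟩
  -- the bound
  have hrpow : R ^ (-(2:ℝ)) = (R^2)⁻¹ := by
    rw [show (-(2:ℝ)) = ((-2:ℤ):ℝ) by norm_num, Real.rpow_intCast, zpow_neg, zpow_two, sq]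
  have hsR : (2:ℝ) ≤ Real.sqrt R := by
    rw [show (2:ℝ) = Real.sqrt 4 by
      rw [show (4:ℝ) = 2^2 by norm_num, Real.sqrt_sq (by norm_num : (0:ℝ) ≤ 2)]]
    exact Real.sqrt_le_sqrt hR
  intro x
  rcases lt_or_ge ‖x‖ (Real.sqrt R / 2) with hxA | hxB
  · -- small x : function vanishes near x
    have hWo : IsOpen {z : E | ‖z‖ < Real.sqrt R / 2} :=
      isOpen_lt continuous_norm continuous_const
    have hev : (fun y : E => bt (R⁻¹ * ‖y‖^2) * G y) =ᶠ[nhds x] fun _ => (0:ℝ) := by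
      filter_upwards [hWo.mem_nhds hxA] with z hz
      have hz' : ‖z‖ < Real.sqrt R / 2 := hz
      have hsq : ‖z‖^2 < R / 4 := by
        nlinarith [norm_nonneg z, Real.sq_sqrt hR0.le, Real.sqrt_nonneg R]
      have hz1 : R⁻¹ * ‖z‖^2 ≤ 1/4 := by
        have h2 := mul_le_mul_of_nonneg_left hsq.le hRinv.le
        have hRR : R⁻¹ * (R/4) = 1/4 := by field_simp
        linarith [h2, hRR.le]
      rw [hbt0 _ hz1, zero_mul]
    rw [iFD_congr_nhds hev 2, iteratedFDeriv_zero_fun]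
    simp only [Pi.zero_apply, norm_zero]
    have h1 : (0:ℝ) < R ^ (-(2:ℝ)) := Real.rpow_pos_of_pos hR0 _
    nlinarith
  · -- main case
    have hx1 : (1:ℝ) ≤ ‖x‖ := by linarith
    have hxpos : (0:ℝ) < ‖x‖ := by linarith
    have hx0 : x ≠ 0 := by
      intro h; rw [h] at hxpos; simp at hxpos
    have hx2 : R ≤ 4 * ‖x‖^2 := by
      nlinarith [Real.sq_sqrt hR0.le, Real.sqrt_nonneg R]
    obtain ⟨hd1, hd2⟩ := normsq_iFD_bounds R⁻¹ hRinv x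
    -- derivative bounds for the cutoff
    set D : ℝ := 3 * R⁻¹ * ‖x‖ with hD_def
    have hDpos : 0 < D := by positivity
    have hd1' : ‖iteratedFDeriv ℝ 1 (fun y : E => R⁻¹ * ‖y‖^2) x‖ ≤ D ^ 1 := by
      rw [pow_one, hD_def]
      refine le_trans hd1 ?_
      nlinarith [mul_nonneg hRinv.le (norm_nonneg x)]
    have hd2' : ‖iteratedFDeriv ℝ 2 (fun y : E => R⁻¹ * ‖y‖^2) x‖ ≤ D ^ 2 := by
      refine le_trans hd2 ?_
      have hRR : R⁻¹ * R⁻¹ * R = R⁻¹ := by field_simp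
      have h2 := mul_le_mul_of_nonneg_left hx2 (mul_nonneg hRinv.le hRinv.le)
      rw [hD_def]
      nlinarith [h2, hRR, sq_nonneg (R⁻¹ * ‖x‖)]
    have hφ1 : ‖iteratedFDeriv ℝ 1 (fun y : E => bt (R⁻¹ * ‖y‖^2)) x‖ ≤ Cb * D := by
      have h := norm_iteratedFDeriv_comp_le (g := bt) (f := fun y : E => R⁻¹ * ‖y‖^2)
        (n := 1) hbt hh (WithTop.coe_le_coe.2 le_top) x (C := Cb) (D := D)
        (fun i hi => hCb i (by omega) _)
        (fun i h1i hi1 => by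
          interval_cases i
          exact hd1')
      simp only [Function.comp_def] at h
      refine le_trans h ?_
      norm_num [Nat.factorial]
    have hφ2 : ‖iteratedFDeriv ℝ 2 (fun y : E => bt (R⁻¹ * ‖y‖^2)) x‖ ≤ 2 * Cb * D^2 := by
      have h := norm_iteratedFDeriv_comp_le (g := bt) (f := fun y : E => R⁻¹ * ‖y‖^2)
        (n := 2) hbt hh (WithTop.coe_le_coe.2 le_top) x (C := Cb) (D := D)
        (fun i hi => hCb i (by omega) _)
        (fun i h1i hi1 => by
          interval_cases i
          · exact hd1'
          · exact hd2')
      simp only [Function.comp_def] at h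
      refine le_trans h ?_
      norm_num [Nat.factorial]
    have hφ0 : ‖iteratedFDeriv ℝ 0 (fun y : E => bt (R⁻¹ * ‖y‖^2)) x‖ ≤ Cb := by
      rw [norm_iteratedFDeriv_zero]
      have h := hCb 0 (by norm_num) (R⁻¹ * ‖x‖^2)
      rwa [norm_iteratedFDeriv_zero] at h
    -- bounds on G
    have hg0 : ‖iteratedFDeriv ℝ 0 G x‖ ≤ (‖x‖^2)⁻¹ := by
      have := hGb 0 (by norm_num) x hx1; simpa using this
    have hg1 : ‖iteratedFDeriv ℝ 1 G x‖ ≤ (‖x‖^3)⁻¹ := by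
      have := hGb 1 (by norm_num) x hx1; simpa using this
    have hg2 : ‖iteratedFDeriv ℝ 2 G x‖ ≤ (‖x‖^4)⁻¹ := by
      have := hGb 2 (by norm_num) x hx1; simpa using this
    -- elementary inequalities
    have e2 : (‖x‖^2)⁻¹ ≤ 4 * R⁻¹ := inv_le_mul_inv' (by positivity) hR0 hx2
    have e4 : (‖x‖^4)⁻¹ ≤ 16 * (R^2)⁻¹ := by
      refine inv_le_mul_inv' (by positivity) (by positivity) ?_
      nlinarith [hx2, hR0.le, norm_nonneg x, sq_nonneg ‖x‖]
    have e3 : ‖x‖ * (‖x‖^3)⁻¹ = (‖x‖^2)⁻¹ := by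
      field_simp
    have e5 : ‖x‖^2 * (‖x‖^2)⁻¹ = 1 := mul_inv_cancel₀ (by positivity)
    have einv2 : R⁻¹ * R⁻¹ = (R^2)⁻¹ := by
      rw [← mul_inv, sq]
    -- the three terms
    have t0 : ‖iteratedFDeriv ℝ 0 (fun y : E => bt (R⁻¹ * ‖y‖^2)) x‖ *
        ‖iteratedFDeriv ℝ 2 G x‖ ≤ 16 * Cb * (R^2)⁻¹ := by
      calc _ ≤ Cb * (‖x‖^4)⁻¹ :=
            mul_le_mul hφ0 hg2 (norm_nonneg _) (by linarith)
        _ ≤ Cb * (16 * (R^2)⁻¹) := mul_le_mul_of_nonneg_left e4 (by linarith)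
        _ = 16 * Cb * (R^2)⁻¹ := by ring
    have t1 : ‖iteratedFDeriv ℝ 1 (fun y : E => bt (R⁻¹ * ‖y‖^2)) x‖ *
        ‖iteratedFDeriv ℝ 1 G x‖ ≤ 12 * Cb * (R^2)⁻¹ := by
      calc _ ≤ (Cb * D) * (‖x‖^3)⁻¹ :=
            mul_le_mul hφ1 hg1 (norm_nonneg _) (mul_nonneg (by linarith) hDpos.le)
        _ = 3 * Cb * R⁻¹ * (‖x‖ * (‖x‖^3)⁻¹) := by rw [hD_def]; ring
        _ = 3 * Cb * R⁻¹ * (‖x‖^2)⁻¹ := by rw [e3]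
        _ ≤ 3 * Cb * R⁻¹ * (4 * R⁻¹) := by
            refine mul_le_mul_of_nonneg_left e2 ?_
            have : (0:ℝ) ≤ Cb := by linarith
            positivity
        _ = 12 * Cb * (R⁻¹ * R⁻¹) := by ring
        _ = 12 * Cb * (R^2)⁻¹ := by rw [einv2]
    have t2 : ‖iteratedFDeriv ℝ 2 (fun y : E => bt (R⁻¹ * ‖y‖^2)) x‖ *
        ‖iteratedFDeriv ℝ 0 G x‖ ≤ 18 * Cb * (R^2)⁻¹ := by
      calc _ ≤ (2 * Cb * D^2) * (‖x‖^2)⁻¹ := by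
            refine mul_le_mul hφ2 hg0 (norm_nonneg _) ?_
            have : (0:ℝ) ≤ Cb := by linarith
            positivity
        _ = 18 * Cb * (R⁻¹ * R⁻¹) * (‖x‖^2 * (‖x‖^2)⁻¹) := by rw [hD_def]; ring
        _ = 18 * Cb * (R^2)⁻¹ := by rw [e5, einv2]; ring
    -- assemble with the product rule
    have hxU : x ∈ {z : E | z ≠ 0} := hx0
    have hwu : iteratedFDerivWithin ℝ 2 (fun y : E => bt (R⁻¹ * ‖y‖^2) * G y)
        {z : E | z ≠ 0} x = iteratedFDeriv ℝ 2 (fun y : E => bt (R⁻¹ * ‖y‖^2) * G y) x :=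
      iteratedFDerivWithin_of_isOpen 2 hUo hxU
    have hwφ : ∀ i : ℕ, iteratedFDerivWithin ℝ i (fun y : E => bt (R⁻¹ * ‖y‖^2))
        {z : E | z ≠ 0} x = iteratedFDeriv ℝ i (fun y : E => bt (R⁻¹ * ‖y‖^2)) x :=
      fun i => iteratedFDerivWithin_of_isOpen i hUo hxU
    have hwG : ∀ i : ℕ, iteratedFDerivWithin ℝ i G {z : E | z ≠ 0} x =
        iteratedFDeriv ℝ i G x := fun i => iteratedFDerivWithin_of_isOpen i hUo hxU
    have hsum := norm_iteratedFDerivWithin_mul_le (𝕜 := ℝ)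
      (f := fun y : E => bt (R⁻¹ * ‖y‖^2)) (g := G) (s := {z : E | z ≠ 0})
      hφ.contDiffOn hG hUo.uniqueDiffOn hxU (n := 2) (WithTop.coe_le_coe.2 le_top)
    rw [hwu, Finset.sum_range_succ, Finset.sum_range_succ, Finset.sum_range_one] at hsum
    norm_num [hwφ 0, hwφ 1, hwφ 2, hwG 0, hwG 1, hwG 2] at hsum
    rw [hrpow]
    have habs : ‖iteratedFDeriv ℝ 0 (fun y : E => bt (R⁻¹ * ‖y‖^2)) x‖ =
        |bt (R⁻¹ * ‖x‖^2)| := by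
      rw [norm_iteratedFDeriv_zero, Real.norm_eq_abs]
    rw [habs] at t0
    have hfinal : (0:ℝ) ≤ Cb * (R^2)⁻¹ := by
      have : (0:ℝ) ≤ Cb := by linarith
      positivity
    calc ‖iteratedFDeriv ℝ 2 (fun y : E => bt (R⁻¹ * ‖y‖^2) * G y) x‖
        ≤ _ := hsum
      _ ≤ 100 * Cb * (R^2)⁻¹ := by rw [norm_iteratedFDeriv_one] at t1; linarith [t0, t1, t2, hfinal]
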